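/- arXiv:2511.14743 — 5 statements merged into one kernel-verified Lean document; each statement's English description precedes it below -/
import Mathlib

section
/- Let U and F be measurable spaces, let μ (the prior p(u)) and ν (the variational distribution q(u)) be probability measures on U with ν absolutely continuous with respect to μ, let K be a Markov kernel from U to F (the conditional p(f | u)), and let L : F → ℝ be measurable with L(f) > 0 for all f (the likelihood p(Y | f)). Define the evidence p(Y) = ∫_U (∫_F L(f) K(u)(df)) μ(du). Assume: (i) p(Y) is finite; (ii) for ν-almost every u, L is integrable with respect to K(u) and log ∘ L is integrable with respect to K(u); (iii) u ↦ ∫_F log L(f) K(u)(df) is integrable with respect to ν; and (iv) KL(ν‖μ) is finite. Then log p(Y) ≥ ∫_U ∫_F log L(f) K(u)(df) ν(du) − KL(ν‖μ), i.e., log p(Y) ≥ E_{q(f)}[log p(Y | f)] − KL(q(u)‖p(u)) where q(f) = ∫ p(f | u) q(u) du. (Theorem 1, the evidence lower bound (ELBO) for the latent GP model.) -/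
open MeasureTheory ProbabilityTheory
open scoped ENNReal

/-- The Kullback–Leibler divergence `KL(ν‖μ) = ∫ log (dν/dμ) dν` of two measures, expressed
via the Radon–Nikodym derivative. -/
noncomputable def klDivergence {U : Type*} [MeasurableSpace U] (ν μ : Measure U) : ℝ :=
  ∫ u, Real.log ((ν.rnDeriv μ u).toReal) ∂ν

lemma my_integral_pos {α : Type*} [MeasurableSpace α] {m : Measure α} [IsProbabilityMeasure m]
    {f : α → ℝ} (hf : Integrable f m) (h : ∀ᵐ x ∂m, 0 < f x) : 0 < ∫ x, f x ∂m := by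
  refine (integral_pos_iff_support_of_nonneg_ae (h.mono fun x hx => hx.le) hf).2 ?_
  rw [pos_iff_ne_zero]
  intro hz
  have h0 : ∀ᵐ x ∂m, x ∉ Function.support f := measure_eq_zero_iff_ae_notMem.1 hz
  obtain ⟨x, hx1, hx2⟩ := (h.and h0).exists
  exact hx2 (ne_of_gt hx1)

/-- Jensen's inequality for `log`. -/
lemma my_integral_log_le {α : Type*} [MeasurableSpace α] {m : Measure α} [IsProbabilityMeasure m]
    {f : α → ℝ} (hf : Integrable f m) (hlog : Integrable (fun x => Real.log (f x)) m)
    (hpos : ∀ᵐ x ∂m, 0 < f x) :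
    ∫ x, Real.log (f x) ∂m ≤ Real.log (∫ x, f x ∂m) := by
  set c := ∫ x, f x ∂m with hc
  have hcpos : 0 < c := my_integral_pos hf hpos
  have key : ∀ᵐ x ∂m, Real.log (f x) - Real.log c ≤ f x / c - 1 := by
    filter_upwards [hpos] with x hx
    have := Real.log_le_sub_one_of_pos (div_pos hx hcpos)
    rwa [Real.log_div (ne_of_gt hx) (ne_of_gt hcpos)] at this
  have h1 : ∫ x, (Real.log (f x) - Real.log c) ∂m ≤ ∫ x, (f x / c - 1) ∂m := by
    refine integral_mono_ae (hlog.sub (integrable_const _)) ((hf.div_const c).sub (integrable_const _)) key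
  rw [integral_sub hlog (integrable_const _), integral_sub (hf.div_const c) (integrable_const _),
    integral_const, integral_const, integral_div] at h1
  simp only [measureReal_def, measure_univ, ENNReal.toReal_one, smul_eq_mul, one_mul, ← hc,
    div_self (ne_of_gt hcpos)] at h1
  linarith

/-- Theorem 1 (evidence lower bound, ELBO, for the latent GP model): let `μ` be the prior
`p(u)` and `ν` the variational distribution `q(u)` on `U` with `ν ≪ μ`, let `K` be a Markov
kernel from `U` to `F` (the conditional `p(f | u)`), and let `L` be a measurable, positive
likelihood `f ↦ p(Y | f)`. Define the evidence
`p(Y) = ∫_U ∫_F L(f) K(u)(df) μ(du)` (as a Lebesgue integral of the nonnegative `L`).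
Assume (i) `p(Y)` is finite; (ii) for `ν`-a.e. `u`, `L` and `log ∘ L` are integrable with
respect to `K(u)`; (iii) `u ↦ ∫ log L dK(u)` is `ν`-integrable; and (iv) `KL(ν‖μ)` is finite
(the log of the Radon–Nikodym derivative is `ν`-integrable). Then
`log p(Y) ≥ ∫_U ∫_F log L(f) K(u)(df) ν(du) − KL(ν‖μ)`, i.e.
`log p(Y) ≥ E_{q(f)}[log p(Y | f)] − KL(q(u)‖p(u))` where `q(f) = ∫ p(f | u) q(u) du`. -/
theorem elbo_latent_gp {U F : Type*} [MeasurableSpace U] [MeasurableSpace F]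
    (μ ν : Measure U) [IsProbabilityMeasure μ] [IsProbabilityMeasure ν] (hνμ : ν ≪ μ)
    (K : Kernel U F) [IsMarkovKernel K]
    (L : F → ℝ) (hL_meas : Measurable L) (hL_pos : ∀ f, 0 < L f)
    (hpY_fin : (∫⁻ u, ∫⁻ f, ENNReal.ofReal (L f) ∂(K u) ∂μ) ≠ ∞)
    (hL_int : ∀ᵐ u ∂ν, Integrable L (K u) ∧ Integrable (fun f => Real.log (L f)) (K u))
    (hlogL_int : Integrable (fun u => ∫ f, Real.log (L f) ∂(K u)) ν)
    (hKL_fin : Integrable (fun u => Real.log ((ν.rnDeriv μ u).toReal)) ν) :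
    Real.log (∫⁻ u, ∫⁻ f, ENNReal.ofReal (L f) ∂(K u) ∂μ).toReal ≥
      (∫ u, ∫ f, Real.log (L f) ∂(K u) ∂ν) - klDivergence ν μ := by
  set D : U → ℝ≥0∞ := fun u => ν.rnDeriv μ u with hD
  set H : U → ℝ≥0∞ := fun u => ∫⁻ f, ENNReal.ofReal (L f) ∂(K u) with hH
  have hDmeas : Measurable D := Measure.measurable_rnDeriv ν μ
  have hHmeas : Measurable H := Measurable.lintegral_kernel (hL_meas.ennreal_ofReal)
  set X' : U → ℝ≥0∞ := fun u => H u / D u with hX'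
  have hX'meas : Measurable X' := hHmeas.div hDmeas
  set X : U → ℝ := fun u => (X' u).toReal with hX
  -- a.e. facts about D
  have hDpos : ∀ᵐ u ∂ν, 0 < D u := Measure.rnDeriv_pos hνμ
  have hDlt : ∀ᵐ u ∂ν, D u < ∞ := hνμ.ae_le (Measure.rnDeriv_lt_top ν μ)
  -- H is positive everywhere
  have hHpos : ∀ u, 0 < H u := by
    intro u
    rw [pos_iff_ne_zero, hH]
    intro h0
    have := (lintegral_eq_zero_iff hL_meas.ennreal_ofReal).1 h0
    obtain ⟨f, hf⟩ := this.exists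
    simp only [Pi.zero_apply, ENNReal.ofReal_eq_zero] at hf
    exact absurd hf (not_le.2 (hL_pos f))
  -- H is finite a.e.
  have hHlt : ∀ᵐ u ∂ν, H u < ∞ := by
    filter_upwards [hL_int] with u hu
    exact hu.1.lintegral_lt_top
  -- the bochner integral of L equals toReal of H, a.e.
  have hint_eq : ∀ᵐ u ∂ν, ∫ f, L f ∂(K u) = (H u).toReal := by
    refine Filter.Eventually.of_forall fun u => ?_
    rw [hH]
    exact integral_eq_lintegral_of_nonneg_ae
      (Filter.Eventually.of_forall fun f => (hL_pos f).le) hL_meas.aestronglyMeasurable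
  -- inner Jensen
  have hJensen1 : ∀ᵐ u ∂ν, ∫ f, Real.log (L f) ∂(K u) ≤ Real.log ((H u).toReal) := by
    filter_upwards [hL_int, hint_eq] with u hu heq
    have := my_integral_log_le hu.1 hu.2 (Filter.Eventually.of_forall hL_pos)
    rwa [heq] at this
  -- log X = log H.toReal - log D.toReal a.e.
  have hlogX : ∀ᵐ u ∂ν, Real.log (X u) = Real.log ((H u).toReal) - Real.log ((D u).toReal) := by
    filter_upwards [hDpos, hDlt, hHlt] with u h1 h2 h3
    show Real.log ((H u / D u).toReal) = _
    rw [ENNReal.toReal_div, Real.log_div]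
    · exact ENNReal.toReal_ne_zero.2 ⟨(hHpos u).ne', h3.ne⟩
    · exact ENNReal.toReal_ne_zero.2 ⟨h1.ne', h2.ne⟩
  -- lintegral of X' over ν is at most pY
  have hlint_le : ∫⁻ u, X' u ∂ν ≤ ∫⁻ u, H u ∂μ := by
    conv_lhs => rw [← Measure.withDensity_rnDeriv_eq ν μ hνμ]
    rw [lintegral_withDensity_eq_lintegral_mul μ hDmeas hX'meas]
    exact lintegral_mono fun u => ENNReal.mul_div_le
  have hlint_ne : ∫⁻ u, X' u ∂ν ≠ ∞ := (lt_of_le_of_lt hlint_le (lt_top_iff_ne_top.2 hpY_fin)).ne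
  -- X integrable
  have hXint : Integrable X ν :=
    integrable_toReal_of_lintegral_ne_top hX'meas.aemeasurable hlint_ne
  -- X' finite a.e., and X positive a.e.
  have hX'lt : ∀ᵐ u ∂ν, X' u < ∞ := ae_lt_top hX'meas hlint_ne
  have hXpos : ∀ᵐ u ∂ν, 0 < X u := by
    filter_upwards [hDpos, hDlt, hX'lt] with u h1 h2 h3
    refine ENNReal.toReal_pos ?_ h3.ne
    rw [hX']
    exact (ENNReal.div_pos (hHpos u).ne' h2.ne).ne'
  -- ∫ X dν = (∫⁻ X' dν).toReal
  have hXeq : ∫ u, X u ∂ν = (∫⁻ u, X' u ∂ν).toReal :=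
    integral_toReal hX'meas.aemeasurable hX'lt
  -- log X integrable
  have hlogXmeas : Measurable fun u => Real.log (X u) :=
    Real.measurable_log.comp (hX'meas.ennreal_toReal)
  have hlow : Integrable (fun u => (∫ f, Real.log (L f) ∂(K u)) - Real.log ((D u).toReal)) ν :=
    hlogL_int.sub hKL_fin
  have hlogXint : Integrable (fun u => Real.log (X u)) ν := by
    refine integrable_of_le_of_le hlogXmeas.aestronglyMeasurable ?_ ?_ hlow hXint
    · filter_upwards [hlogX, hJensen1] with u h1 h2
      rw [h1]
      linarith
    · filter_upwards [hXpos] with u h1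
      have := Real.log_le_sub_one_of_pos h1
      linarith
  -- outer Jensen
  have hJensen2 : ∫ u, Real.log (X u) ∂ν ≤ Real.log (∫ u, X u ∂ν) :=
    my_integral_log_le hXint hlogXint hXpos
  -- final monotonicity of log
  have hXposint : 0 < ∫ u, X u ∂ν := my_integral_pos hXint hXpos
  have hfinal : Real.log (∫ u, X u ∂ν) ≤
      Real.log (∫⁻ u, ∫⁻ f, ENNReal.ofReal (L f) ∂(K u) ∂μ).toReal := by
    refine Real.log_le_log hXposint ?_
    rw [hXeq]
    exact ENNReal.toReal_mono hpY_fin hlint_le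
  -- chain
  have hchain : (∫ u, ∫ f, Real.log (L f) ∂(K u) ∂ν) - klDivergence ν μ ≤
      ∫ u, Real.log (X u) ∂ν := by
    rw [klDivergence, ← integral_sub hlogL_int hKL_fin]
    refine integral_mono_ae hlow hlogXint ?_
    filter_upwards [hlogX, hJensen1] with u h1 h2
    rw [h1]
    exact sub_le_sub_right h2 _
  exact le_trans hchain (le_trans hJensen2 hfinal)
end

section
/- The exponential kernel is positive semidefinite: for every n ∈ ℕ, every choice of time points t₁, …, tₙ ∈ ℝ, every choice of real coefficients c₁, …, cₙ, and all parameters σ > 0 and ρ > 0, it holds that ∑_{i=1}^{n} ∑_{j=1}^{n} c_i c_j · σ² · exp(−|t_i − t_j| / ρ) ≥ 0. -/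
open MeasureTheory Set

lemma indicator_prod_integral (a b d e : ℝ) (ha : 0 < a) (hb : 0 < b) :
    ∫ x, (Ioo (0:ℝ) a).indicator (fun _ => d) x * (Ioo (0:ℝ) b).indicator (fun _ => e) x
      = d * e * min a b := by
  have h : ∀ x, (Ioo (0:ℝ) a).indicator (fun _ => d) x * (Ioo (0:ℝ) b).indicator (fun _ => e) x
      = (Ioo (0:ℝ) (min a b)).indicator (fun _ => d * e) x := by
    intro x
    rw [← Set.inter_indicator_mul, Set.Ioo_inter_Ioo, max_self]
  simp only [h]
  rw [integral_indicator_const _ measurableSet_Ioo, Real.volume_real_Ioo, sub_zero,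
    max_eq_left (le_of_lt (lt_min ha hb)), smul_eq_mul]
  ring

lemma min_kernel_integrable (a b d e : ℝ) (ha : 0 < a) (hb : 0 < b) :
    Integrable (fun x => (Ioo (0:ℝ) a).indicator (fun _ => d) x *
      (Ioo (0:ℝ) b).indicator (fun _ => e) x) := by
  have h : ∀ x, (Ioo (0:ℝ) a).indicator (fun _ => d) x * (Ioo (0:ℝ) b).indicator (fun _ => e) x
      = (Ioo (0:ℝ) (min a b)).indicator (fun _ => d * e) x := by
    intro x
    rw [← Set.inter_indicator_mul, Set.Ioo_inter_Ioo, max_self]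
  simp only [h]
  rw [integrable_indicator_iff measurableSet_Ioo]
  exact (integrableOn_const_iff).mpr (Or.inr (by rw [Real.volume_Ioo]; exact ENNReal.ofReal_lt_top))

lemma min_kernel_psd {n : ℕ} (a d : Fin n → ℝ) (ha : ∀ i, 0 < a i) :
    0 ≤ ∑ i : Fin n, ∑ j : Fin n, d i * d j * min (a i) (a j) := by
  set f : Fin n → ℝ → ℝ := fun i => (Ioo (0:ℝ) (a i)).indicator (fun _ => d i) with hf
  have step1 : ∑ i : Fin n, ∑ j : Fin n, d i * d j * min (a i) (a j)
      = ∑ i : Fin n, ∑ j : Fin n, ∫ x, f i x * f j x := by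
    refine Finset.sum_congr rfl fun i _ => Finset.sum_congr rfl fun j _ => ?_
    rw [indicator_prod_integral _ _ _ _ (ha i) (ha j)]
  have hint : ∀ i j : Fin n, Integrable (fun x => f i x * f j x) :=
    fun i j => min_kernel_integrable _ _ _ _ (ha i) (ha j)
  have step2 : ∑ i : Fin n, ∑ j : Fin n, ∫ x, f i x * f j x
      = ∫ x, ∑ i : Fin n, ∑ j : Fin n, f i x * f j x := by
    rw [integral_finset_sum]
    · exact Finset.sum_congr rfl fun i _ => (integral_finset_sum _ fun j _ => hint i j).symm
    · exact fun i _ => integrable_finset_sum _ fun j _ => hint i j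
  have step3 : ∀ x, ∑ i : Fin n, ∑ j : Fin n, f i x * f j x = (∑ i : Fin n, f i x) ^ 2 := by
    intro x
    rw [sq, Finset.sum_mul_sum]
  rw [step1, step2]
  simp only [step3]
  exact integral_nonneg fun x => sq_nonneg _

/-- The exponential kernel `k(s,t) = σ² · exp(−|s−t|/ρ)` with amplitude `σ > 0` and
characteristic length scale `ρ > 0` is positive semidefinite. -/
theorem exponential_kernel_posSemidef (n : ℕ) (t : Fin n → ℝ) (c : Fin n → ℝ)
    (σ ρ : ℝ) (hσ : 0 < σ) (hρ : 0 < ρ) :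
    0 ≤ ∑ i : Fin n, ∑ j : Fin n,
      c i * c j * (σ ^ 2 * Real.exp (-|t i - t j| / ρ)) := by
  set a : Fin n → ℝ := fun i => Real.exp (2 * (t i / ρ)) with ha
  set d : Fin n → ℝ := fun i => σ * c i * Real.exp (-(t i / ρ)) with hd
  have key : ∀ i j : Fin n, c i * c j * (σ ^ 2 * Real.exp (-|t i - t j| / ρ))
      = d i * d j * min (a i) (a j) := by
    intro i j
    have hmin : min (a i) (a j) = Real.exp (2 * min (t i / ρ) (t j / ρ)) := by
      rcases le_total (t i / ρ) (t j / ρ) with h | h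
      · rw [min_eq_left h, ha, min_eq_left (Real.exp_le_exp.mpr (by linarith))]
      · rw [min_eq_right h, ha, min_eq_right (Real.exp_le_exp.mpr (by linarith))]
    have habs : -|t i - t j| / ρ = -(t i / ρ) + -(t j / ρ) + 2 * min (t i / ρ) (t j / ρ) := by
      rcases le_total (t i) (t j) with h | h
      · rw [min_eq_left (by gcongr), abs_of_nonpos (by linarith)]
        field_simp
        ring
      · rw [min_eq_right (by gcongr), abs_of_nonneg (by linarith)]
        field_simp
        ring
    rw [hmin, habs, Real.exp_add, Real.exp_add, hd]
    simp only []
    ring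
  calc (0:ℝ) ≤ ∑ i : Fin n, ∑ j : Fin n, d i * d j * min (a i) (a j) :=
        min_kernel_psd a d fun i => Real.exp_pos _
    _ = _ := by
        refine Finset.sum_congr rfl fun i _ => Finset.sum_congr rfl fun j _ => (key i j).symm
end

section
/- The squared exponential (SE) kernel is positive semidefinite: for every n ∈ ℕ, every choice of time points t₁, …, tₙ ∈ ℝ, every choice of real coefficients c₁, …, cₙ, and all parameters σ > 0 and ℓ > 0, it holds that ∑_{i=1}^{n} ∑_{j=1}^{n} c_i c_j · σ² · exp(−(t_i − t_j)² / (2ℓ²)) ≥ 0. -/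
open scoped BigOperators

lemma real_exp_tsum (y : ℝ) : Real.exp y = ∑' k : ℕ, y ^ k / k.factorial := by
  rw [Real.exp_eq_exp_ℝ, NormedSpace.exp_eq_tsum_div]

lemma exp_kernel_psd (n : ℕ) (a x : Fin n → ℝ) :
    0 ≤ ∑ i : Fin n, ∑ j : Fin n, a i * a j * Real.exp (x i * x j) := by
  have hS : ∀ i j : Fin n,
      Summable (fun k : ℕ => a i * x i ^ k * (a j * x j ^ k) / k.factorial) := by
    intro i j
    have := (Real.summable_pow_div_factorial (x i * x j)).mul_left (a i * a j)
    apply this.congr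
    intro k; rw [mul_pow]; ring
  have hsum : ∀ i j : Fin n,
      a i * a j * Real.exp (x i * x j)
        = ∑' k : ℕ, a i * x i ^ k * (a j * x j ^ k) / k.factorial := by
    intro i j
    rw [real_exp_tsum, ← tsum_mul_left]
    congr 1; ext k; rw [mul_pow]; ring
  have hmain : ∑ i : Fin n, ∑ j : Fin n, a i * a j * Real.exp (x i * x j)
      = ∑' k : ℕ, (∑ i : Fin n, a i * x i ^ k) ^ 2 / k.factorial := by
    simp only [hsum]
    rw [Finset.sum_congr rfl (fun i _ => (Summable.tsum_finsetSum (fun j _ => hS i j)).symm)]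
    rw [← Summable.tsum_finsetSum (fun i _ => summable_sum (fun j _ => hS i j))]
    apply tsum_congr
    intro k
    simp only [sq, Finset.sum_mul_sum, Finset.sum_div]
  rw [hmain]
  apply tsum_nonneg
  intro k
  positivity

/-- The squared exponential (SE) kernel `k(s,t) = σ² · exp(−(s−t)²/(2ℓ²))` with amplitude
`σ > 0` and length scale `ℓ > 0` is positive semidefinite. -/
theorem squared_exponential_kernel_posSemidef (n : ℕ) (t : Fin n → ℝ) (c : Fin n → ℝ)
    (σ ℓ : ℝ) (hσ : 0 < σ) (hℓ : 0 < ℓ) :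
    0 ≤ ∑ i : Fin n, ∑ j : Fin n,
      c i * c j * (σ ^ 2 * Real.exp (-(t i - t j) ^ 2 / (2 * ℓ ^ 2))) := by
  have key := exp_kernel_psd n (fun i => c i * Real.exp (-(t i / ℓ) ^ 2 / 2))
    (fun i => t i / ℓ)
  have hrw : ∀ i j : Fin n,
      c i * c j * (σ ^ 2 * Real.exp (-(t i - t j) ^ 2 / (2 * ℓ ^ 2)))
        = σ ^ 2 * (c i * Real.exp (-(t i / ℓ) ^ 2 / 2) *
            (c j * Real.exp (-(t j / ℓ) ^ 2 / 2)) * Real.exp (t i / ℓ * (t j / ℓ))) := by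
    intro i j
    have harg : -(t i - t j) ^ 2 / (2 * ℓ ^ 2)
        = -(t i / ℓ) ^ 2 / 2 + -(t j / ℓ) ^ 2 / 2 + t i / ℓ * (t j / ℓ) := by
      field_simp
      ring
    rw [harg, Real.exp_add, Real.exp_add]
    ring
  calc (0:ℝ) ≤ σ ^ 2 * ∑ i : Fin n, ∑ j : Fin n,
        c i * Real.exp (-(t i / ℓ) ^ 2 / 2) * (c j * Real.exp (-(t j / ℓ) ^ 2 / 2)) *
          Real.exp (t i / ℓ * (t j / ℓ)) := by positivity
    _ = _ := by
      rw [Finset.mul_sum]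
      apply Finset.sum_congr rfl
      intro i _
      rw [Finset.mul_sum]
      apply Finset.sum_congr rfl
      intro j _
      exact (hrw i j).symm
end

section
/- The rational quadratic kernel is positive semidefinite: for every n ∈ ℕ, every choice of time points t₁, …, tₙ ∈ ℝ, every choice of real coefficients c₁, …, cₙ, and all parameters σ > 0, α > 0, and ℓ > 0, it holds that ∑_{i=1}^{n} ∑_{j=1}^{n} c_i c_j · σ² · (1 + (t_i − t_j)² / (2αℓ²))^{−α} ≥ 0. -/
open MeasureTheory Real Set

/-- Fourier-cosine representation of the Gaussian. -/
lemma aux_gauss_cos_integral {b : ℝ} (hb : 0 < b) (d : ℝ) :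
    ∫ x : ℝ, Real.exp (-b * x ^ 2) * Real.cos (d * x)
      = Real.sqrt (π / b) * Real.exp (-d ^ 2 / (4 * b)) := by
  have hb' : 0 < ((b : ℂ)).re := by simpa using hb
  have h := fourierIntegral_gaussian hb' (d : ℂ)
  have hint : Integrable (fun x : ℝ =>
      Complex.exp (Complex.I * d * x) * Complex.exp (-(b : ℂ) * x ^ 2)) := by
    refine (integrable_cexp_quadratic hb' (Complex.I * d) 0).congr
      (Filter.Eventually.of_forall fun x => ?_)
    dsimp only
    rw [← Complex.exp_add]
    ring_nf
  have hre : ∀ x : ℝ,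
      (Complex.exp (Complex.I * d * x) * Complex.exp (-(b : ℂ) * x ^ 2)).re
        = Real.exp (-b * x ^ 2) * Real.cos (d * x) := by
    intro x
    rw [show (Complex.I * (d : ℂ) * (x : ℂ)) = ((d * x : ℝ) : ℂ) * Complex.I by
          push_cast; ring,
        show (-(b : ℂ) * (x : ℂ) ^ 2) = ((-b * x ^ 2 : ℝ) : ℂ) by push_cast; ring,
        ← Complex.ofReal_exp, mul_comm, Complex.re_ofReal_mul,
        Complex.exp_ofReal_mul_I_re]
  calc ∫ x : ℝ, Real.exp (-b * x ^ 2) * Real.cos (d * x)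
      = ∫ x : ℝ, (Complex.exp (Complex.I * d * x) * Complex.exp (-(b : ℂ) * x ^ 2)).re := by
        simp_rw [hre]
    _ = (∫ x : ℝ, Complex.exp (Complex.I * d * x) * Complex.exp (-(b : ℂ) * x ^ 2)).re :=
        integral_re hint
    _ = Real.sqrt (π / b) * Real.exp (-d ^ 2 / (4 * b)) := by
        rw [h,
          show ((π : ℂ) / (b : ℂ)) = ((π / b : ℝ) : ℂ) by push_cast; ring,
          show ((1 / 2 : ℂ)) = (((1 / 2 : ℝ) : ℝ) : ℂ) by norm_num,
          ← Complex.ofReal_cpow (by positivity),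
          show (-(d : ℂ) ^ 2 / (4 * (b : ℂ))) = ((-d ^ 2 / (4 * b) : ℝ) : ℂ) by
            push_cast; ring,
          ← Complex.ofReal_exp, ← Complex.ofReal_mul, Complex.ofReal_re,
          Real.sqrt_eq_rpow]

lemma aux_cos_sum_sq {n : ℕ} (t c : Fin n → ℝ) (x : ℝ) :
    ∑ i : Fin n, ∑ j : Fin n, c i * c j * Real.cos ((t i - t j) * x)
      = (∑ i : Fin n, c i * Real.cos (t i * x)) ^ 2
        + (∑ i : Fin n, c i * Real.sin (t i * x)) ^ 2 := by
  rw [sq, sq, Finset.sum_mul_sum, Finset.sum_mul_sum, ← Finset.sum_add_distrib]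
  refine Finset.sum_congr rfl fun i _ => ?_
  rw [← Finset.sum_add_distrib]
  refine Finset.sum_congr rfl fun j _ => ?_
  rw [sub_mul, Real.cos_sub]
  ring

/-- The Gaussian kernel is positive semidefinite. -/
lemma aux_gauss_psd {n : ℕ} (t c : Fin n → ℝ) {a : ℝ} (ha : 0 ≤ a) :
    0 ≤ ∑ i : Fin n, ∑ j : Fin n, c i * c j * Real.exp (-a * (t i - t j) ^ 2) := by
  rcases eq_or_lt_of_le ha with h0 | ha
  · simp only [← h0, neg_zero, zero_mul, Real.exp_zero, mul_one, ← Finset.sum_mul_sum]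
    exact mul_self_nonneg _
  · set b : ℝ := 1 / (4 * a) with hbdef
    have hb : 0 < b := by positivity
    have hsq : 0 < Real.sqrt (π / b) := Real.sqrt_pos.mpr (by positivity)
    have key : ∀ d : ℝ, Real.sqrt (π / b) * Real.exp (-a * d ^ 2)
        = ∫ x : ℝ, Real.exp (-b * x ^ 2) * Real.cos (d * x) := by
      intro d
      rw [aux_gauss_cos_integral hb d]
      congr 1
      rw [hbdef]
      field_simp
    have hInt : ∀ (K d : ℝ),
        Integrable (fun x : ℝ => K * (Real.exp (-b * x ^ 2) * Real.cos (d * x))) := by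
      intro K d
      have h1 : Integrable (fun x : ℝ => Real.cos (d * x) * Real.exp (-b * x ^ 2)) := by
        refine (integrable_exp_neg_mul_sq hb).bdd_mul (c := 1) ?_ (Filter.Eventually.of_forall fun x => by
          rw [Real.norm_eq_abs]; exact Real.abs_cos_le_one _)
        exact (Real.continuous_cos.comp (continuous_const.mul continuous_id)).aestronglyMeasurable
      refine (h1.const_mul K).congr (Filter.Eventually.of_forall fun x => by ring)
    have hS : 0 ≤ Real.sqrt (π / b) *
        ∑ i : Fin n, ∑ j : Fin n, c i * c j * Real.exp (-a * (t i - t j) ^ 2) := by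
      have hcalc : Real.sqrt (π / b) *
          (∑ i : Fin n, ∑ j : Fin n, c i * c j * Real.exp (-a * (t i - t j) ^ 2))
          = ∫ x : ℝ, Real.exp (-b * x ^ 2) *
              ((∑ i : Fin n, c i * Real.cos (t i * x)) ^ 2
                + (∑ i : Fin n, c i * Real.sin (t i * x)) ^ 2) := by
        calc Real.sqrt (π / b) *
            (∑ i : Fin n, ∑ j : Fin n, c i * c j * Real.exp (-a * (t i - t j) ^ 2))
            = ∑ i : Fin n, ∑ j : Fin n, c i * c j *
                (Real.sqrt (π / b) * Real.exp (-a * (t i - t j) ^ 2)) := by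
              rw [Finset.mul_sum]
              refine Finset.sum_congr rfl fun i _ => ?_
              rw [Finset.mul_sum]
              exact Finset.sum_congr rfl fun j _ => by ring
          _ = ∑ i : Fin n, ∑ j : Fin n,
                ∫ x : ℝ, c i * c j * (Real.exp (-b * x ^ 2) * Real.cos ((t i - t j) * x)) := by
              refine Finset.sum_congr rfl fun i _ => Finset.sum_congr rfl fun j _ => ?_
              rw [key (t i - t j), ← MeasureTheory.integral_const_mul]
          _ = ∫ x : ℝ, ∑ i : Fin n, ∑ j : Fin n,
                c i * c j * (Real.exp (-b * x ^ 2) * Real.cos ((t i - t j) * x)) := by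
              rw [integral_finset_sum _ fun i _ =>
                integrable_finset_sum _ fun j _ => hInt _ _]
              refine Finset.sum_congr rfl fun i _ => ?_
              rw [integral_finset_sum _ fun j _ => hInt _ _]
          _ = _ := by
              refine integral_congr_ae (Filter.Eventually.of_forall fun x => ?_)
              dsimp only
              rw [← aux_cos_sum_sq t c x, Finset.mul_sum]
              refine Finset.sum_congr rfl fun i _ => ?_
              rw [Finset.mul_sum]
              exact Finset.sum_congr rfl fun j _ => by ring
      rw [hcalc]
      exact integral_nonneg fun x => by positivity
    exact nonneg_of_mul_nonneg_right hS hsq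

/-- The rational quadratic kernel `k(s,t) = σ² · (1 + (s−t)²/(2αℓ²))^(−α)` with amplitude
`σ > 0`, shape parameter `α > 0`, and length scale `ℓ > 0` is positive semidefinite. -/
theorem rational_quadratic_kernel_posSemidef (n : ℕ) (t : Fin n → ℝ) (c : Fin n → ℝ)
    (σ α ℓ : ℝ) (hσ : 0 < σ) (hα : 0 < α) (hℓ : 0 < ℓ) :
    0 ≤ ∑ i : Fin n, ∑ j : Fin n,
      c i * c j * (σ ^ 2 * (1 + (t i - t j) ^ 2 / (2 * α * ℓ ^ 2)) ^ (-α)) := by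
  have hG : 0 < Real.Gamma α := Real.Gamma_pos_of_pos hα
  have hL : 0 < 2 * α * ℓ ^ 2 := by positivity
  have hrpos : ∀ i j : Fin n, 0 < 1 + (t i - t j) ^ 2 / (2 * α * ℓ ^ 2) := fun i j => by
    positivity
  have hr1 : ∀ i j : Fin n, 1 ≤ 1 + (t i - t j) ^ 2 / (2 * α * ℓ ^ 2) := fun i j =>
    le_add_of_nonneg_right (by positivity)
  have hInt : ∀ (K r : ℝ), 1 ≤ r → IntegrableOn
      (fun s : ℝ => K * (s ^ (α - 1) * Real.exp (-(r * s)))) (Ioi 0) := by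
    intro K r hr
    refine Integrable.mono' ((Real.GammaIntegral_convergent hα).const_mul |K|) ?_ ?_
    · refine Measurable.aestronglyMeasurable ?_
      fun_prop
    · filter_upwards [ae_restrict_mem measurableSet_Ioi] with s hs
      have hs0 : (0:ℝ) < s := hs
      have h1 : Real.exp (-(r * s)) ≤ Real.exp (-s) :=
        Real.exp_le_exp.mpr (by nlinarith)
      have h2 : (0:ℝ) ≤ s ^ (α - 1) := Real.rpow_nonneg hs0.le _
      rw [Real.norm_eq_abs, abs_mul, abs_of_nonneg (mul_nonneg h2 (Real.exp_pos _).le)]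
      calc |K| * (s ^ (α - 1) * Real.exp (-(r * s)))
          ≤ |K| * (s ^ (α - 1) * Real.exp (-s)) := by gcongr
        _ = |K| * (Real.exp (-s) * s ^ (α - 1)) := by ring
  have key : ∀ i j : Fin n,
      c i * c j * (σ ^ 2 * (1 + (t i - t j) ^ 2 / (2 * α * ℓ ^ 2)) ^ (-α))
      = ∫ s in Ioi (0:ℝ), (c i * c j * (σ ^ 2 / Real.Gamma α)) *
          (s ^ (α - 1) * Real.exp (-((1 + (t i - t j) ^ 2 / (2 * α * ℓ ^ 2)) * s))) := by
    intro i j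
    rw [MeasureTheory.integral_const_mul,
        Real.integral_rpow_mul_exp_neg_mul_Ioi hα (hrpos i j),
        one_div, Real.inv_rpow (hrpos i j).le, ← Real.rpow_neg (hrpos i j).le]
    field_simp
  have hswap : ∑ i : Fin n, ∑ j : Fin n,
      c i * c j * (σ ^ 2 * (1 + (t i - t j) ^ 2 / (2 * α * ℓ ^ 2)) ^ (-α))
      = ∫ s in Ioi (0:ℝ), ∑ i : Fin n, ∑ j : Fin n,
          (c i * c j * (σ ^ 2 / Real.Gamma α)) *
            (s ^ (α - 1) * Real.exp (-((1 + (t i - t j) ^ 2 / (2 * α * ℓ ^ 2)) * s))) := by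
    calc ∑ i : Fin n, ∑ j : Fin n,
        c i * c j * (σ ^ 2 * (1 + (t i - t j) ^ 2 / (2 * α * ℓ ^ 2)) ^ (-α))
        = ∑ i : Fin n, ∑ j : Fin n, ∫ s in Ioi (0:ℝ),
            (c i * c j * (σ ^ 2 / Real.Gamma α)) *
              (s ^ (α - 1) * Real.exp (-((1 + (t i - t j) ^ 2 / (2 * α * ℓ ^ 2)) * s))) :=
          Finset.sum_congr rfl fun i _ => Finset.sum_congr rfl fun j _ => key i j
      _ = _ := by
          rw [integral_finset_sum _ fun i _ =>
            integrable_finset_sum _ fun j _ => hInt _ _ (hr1 i j)]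
          refine Finset.sum_congr rfl fun i _ => ?_
          rw [integral_finset_sum _ fun j _ => hInt _ _ (hr1 i j)]
  rw [hswap]
  refine setIntegral_nonneg measurableSet_Ioi fun s hs => ?_
  have hs0 : (0:ℝ) < s := hs
  have hpsd := aux_gauss_psd t c (a := s / (2 * α * ℓ ^ 2)) (by positivity)
  have hfac : (0:ℝ) ≤ s ^ (α - 1) * Real.exp (-s) * (σ ^ 2 / Real.Gamma α) := by positivity
  calc (0:ℝ) ≤ (s ^ (α - 1) * Real.exp (-s) * (σ ^ 2 / Real.Gamma α)) *
        ∑ i : Fin n, ∑ j : Fin n,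
          c i * c j * Real.exp (-(s / (2 * α * ℓ ^ 2)) * (t i - t j) ^ 2) :=
      mul_nonneg hfac hpsd
    _ = _ := by
        rw [Finset.mul_sum]
        refine Finset.sum_congr rfl fun i _ => ?_
        rw [Finset.mul_sum]
        refine Finset.sum_congr rfl fun j _ => ?_
        rw [show -((1 + (t i - t j) ^ 2 / (2 * α * ℓ ^ 2)) * s)
              = -s + -(s / (2 * α * ℓ ^ 2)) * (t i - t j) ^ 2 by ring,
            Real.exp_add]
        ring
end

section
/- Gaussian smoothing of the normal CDF: for all real numbers c, μ, all κ > 0, and all ν ≥ 0, it holds that ∫_ℝ Φ((c − f)/κ) dN(μ, ν²)(f) = Φ((c − μ)/√(κ² + ν²)), where the integral is taken with respect to the Gaussian measure on ℝ with mean μ and variance ν². -/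
open MeasureTheory ProbabilityTheory

/-- `Φ`, the cumulative distribution function of the standard normal distribution. -/
noncomputable def stdNormalCDF (x : ℝ) : ℝ :=
  ((gaussianReal 0 1) (Set.Iic x)).toReal

open scoped NNReal ENNReal Real

lemma gaussianReal_Iic_toReal (m : ℝ) (v : ℝ≥0) (hv : v ≠ 0) (c : ℝ) :
    ((gaussianReal m v) (Set.Iic c)).toReal = stdNormalCDF ((c - m) / Real.sqrt v) := by
  have hvpos : (0:ℝ) < v := lt_of_le_of_ne v.coe_nonneg (by exact_mod_cast (Ne.symm hv))
  have hs : (0:ℝ) < Real.sqrt v := Real.sqrt_pos.mpr hvpos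
  have h1 : (gaussianReal 0 1).map ((Real.sqrt v) * ·) = gaussianReal 0 v := by
    rw [gaussianReal_map_const_mul]
    congr 1
    · ring
    · rw [mul_one, ← NNReal.coe_inj, NNReal.coe_mk]
      exact Real.sq_sqrt hvpos.le
  have h2 : (gaussianReal m v) = (gaussianReal 0 1).map (fun x => Real.sqrt v * x + m) := by
    rw [show (fun x : ℝ => Real.sqrt v * x + m) = ((· + m) ∘ ((Real.sqrt v) * ·)) from rfl,
      ← Measure.map_map (measurable_id'.add_const m) (measurable_const_mul _), h1,
      gaussianReal_map_add_const, zero_add]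
  have hpre : (fun x : ℝ => Real.sqrt v * x + m) ⁻¹' Set.Iic c
      = Set.Iic ((c - m) / Real.sqrt v) := by
    ext x
    simp only [Set.mem_preimage, Set.mem_Iic]
    rw [le_div_iff₀ hs, mul_comm]
    constructor <;> intro h <;> linarith
  rw [h2, Measure.map_apply ((measurable_const_mul _).add_const m) measurableSet_Iic, hpre]
  rfl

lemma gaussianPDFReal_conv_pointwise (m x f : ℝ) (v w : ℝ≥0) (hv : v ≠ 0) (hw : w ≠ 0) :
    gaussianPDFReal 0 v (x - f) * gaussianPDFReal m w f =
      gaussianPDFReal m (v + w) x *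
        gaussianPDFReal (((w:ℝ) * x + (v:ℝ) * m) / ((v:ℝ) + (w:ℝ))) (v * w / (v + w)) f := by
  have hV : (0:ℝ) < v := lt_of_le_of_ne v.coe_nonneg (by exact_mod_cast (Ne.symm hv))
  have hW : (0:ℝ) < w := lt_of_le_of_ne w.coe_nonneg (by exact_mod_cast (Ne.symm hw))
  have hS : ((v * w / (v + w) : ℝ≥0) : ℝ) = (v:ℝ) * (w:ℝ) / ((v:ℝ) + (w:ℝ)) := by push_cast; ring
  simp only [gaussianPDFReal, hS, NNReal.coe_add, sub_zero]
  rw [mul_mul_mul_comm, mul_mul_mul_comm (Real.sqrt (2 * π * ((v:ℝ) + (w:ℝ))))⁻¹,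
    ← Real.exp_add, ← Real.exp_add]
  have hπ : (0:ℝ) < π := Real.pi_pos
  congr 1
  · rw [← mul_inv, ← mul_inv, ← Real.sqrt_mul (by positivity), ← Real.sqrt_mul (by positivity)]
    congr 2
    field_simp
  · have hVW : (0:ℝ) < (v:ℝ) + (w:ℝ) := by positivity
    congr 1
    field_simp
    ring

/-- Gaussian smoothing of the normal CDF:
`∫ Φ((c − f)/κ) dN(μ, ν²)(f) = Φ((c − μ)/√(κ² + ν²))` for `κ > 0` and `ν ≥ 0`. -/
theorem integral_stdNormalCDF_gaussian (c μ κ ν : ℝ) (hκ : 0 < κ) (hν : 0 ≤ ν) :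
    ∫ f, stdNormalCDF ((c - f) / κ) ∂(gaussianReal μ ⟨ν ^ 2, sq_nonneg ν⟩) =
      stdNormalCDF ((c - μ) / Real.sqrt (κ ^ 2 + ν ^ 2)) := by
  rcases eq_or_lt_of_le hν with hν0 | hνpos
  · have h0 : gaussianReal μ ⟨ν ^ 2, sq_nonneg ν⟩ = gaussianReal μ (0 : ℝ≥0) := by
      congr 1
      apply NNReal.eq
      show ν ^ 2 = 0
      rw [← hν0]
      norm_num
    rw [h0, gaussianReal_zero_var, integral_dirac, ← hν0]
    norm_num [Real.sqrt_sq hκ.le]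
  · set v : ℝ≥0 := ⟨κ ^ 2, sq_nonneg κ⟩ with hv_def
    set w : ℝ≥0 := ⟨ν ^ 2, sq_nonneg ν⟩ with hw_def
    have hv : v ≠ 0 := by
      rw [ne_eq, ← NNReal.coe_eq_zero]
      show ¬κ ^ 2 = 0
      positivity
    have hw : w ≠ 0 := by
      rw [ne_eq, ← NNReal.coe_eq_zero]
      show ¬ν ^ 2 = 0
      positivity
    have hvw : v + w ≠ 0 := by simp [add_eq_zero, hv]
    have hswne : v * w / (v + w) ≠ 0 := by
      rw [ne_eq, div_eq_zero_iff]
      simp [hv, hw, hvw]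
    -- the integrand as an ENNReal-valued function
    set g : ℝ → ℝ≥0∞ := fun f => gaussianReal 0 v (Set.Iic (c - f)) with hg_def
    have meas_g : Measurable g := by
      have mono : Monotone (fun x : ℝ => gaussianReal 0 v (Set.Iic x)) :=
        fun a b hab => measure_mono (Set.Iic_subset_Iic.mpr hab)
      exact mono.measurable.comp (measurable_const.sub measurable_id)
    have hΦ : ∀ f : ℝ, stdNormalCDF ((c - f) / κ) = (g f).toReal := by
      intro f
      rw [hg_def, gaussianReal_Iic_toReal 0 v hv, sub_zero, hv_def]
      show _ = stdNormalCDF ((c - f) / Real.sqrt (κ ^ 2))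
      rw [Real.sqrt_sq hκ.le]
    simp_rw [hΦ]
    rw [integral_eq_lintegral_of_nonneg_ae (ae_of_all _ fun f => ENNReal.toReal_nonneg)
      (meas_g.ennreal_toReal.aestronglyMeasurable)]
    have hg_ne : ∀ f, g f ≠ ∞ := fun f => measure_ne_top _ _
    simp_rw [ENNReal.ofReal_toReal (hg_ne _)]
    have key : ∫⁻ f, g f ∂(gaussianReal μ w) = gaussianReal μ (v + w) (Set.Iic c) := by
      rw [gaussianReal_of_var_ne_zero μ hw,
        lintegral_withDensity_eq_lintegral_mul _ (measurable_gaussianPDF μ w) meas_g]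
      have hgf : ∀ f : ℝ, g f = ∫⁻ x in Set.Iic c, gaussianPDF 0 v (x - f) ∂volume := by
        intro f
        have hpre : (· - f) ⁻¹' Set.Iic (c - f) = Set.Iic c := by
          ext x
          simp [sub_le_sub_iff_right]
        show gaussianReal 0 v (Set.Iic (c - f)) = _
        rw [gaussianReal_apply 0 hv, ← (measurePreserving_sub_right volume f
          |>.setLIntegral_comp_preimage measurableSet_Iic (measurable_gaussianPDF 0 v)), hpre]
      have hpt : ∀ x f : ℝ, gaussianPDF μ w f * gaussianPDF 0 v (x - f)
          = gaussianPDF μ (v + w) x *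
            gaussianPDF (((w:ℝ) * x + (v:ℝ) * μ) / ((v:ℝ) + (w:ℝ))) (v * w / (v + w)) f := by
        intro x f
        simp only [gaussianPDF]
        rw [← ENNReal.ofReal_mul (gaussianPDFReal_nonneg _ _ _),
          ← ENNReal.ofReal_mul (gaussianPDFReal_nonneg _ _ _),
          mul_comm (gaussianPDFReal μ w f), gaussianPDFReal_conv_pointwise μ x f v w hv hw]
      calc ∫⁻ f, (gaussianPDF μ w * g) f ∂volume
          = ∫⁻ f, ∫⁻ x in Set.Iic c, gaussianPDF μ w f * gaussianPDF 0 v (x - f) ∂volume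
              ∂volume := by
            refine lintegral_congr fun f => ?_
            have hm : Measurable fun x : ℝ => gaussianPDF 0 v (x - f) :=
              (measurable_gaussianPDF 0 v).comp (measurable_id.sub_const f)
            rw [Pi.mul_apply, hgf f, lintegral_const_mul _ hm]
        _ = ∫⁻ x in Set.Iic c, ∫⁻ f, gaussianPDF μ w f * gaussianPDF 0 v (x - f) ∂volume
              ∂volume := by
            refine lintegral_lintegral_swap ?_
            exact (((measurable_gaussianPDF μ w).comp measurable_fst).mul
              ((measurable_gaussianPDF 0 v).comp (measurable_snd.sub measurable_fst))).aemeasurable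
        _ = ∫⁻ x in Set.Iic c, gaussianPDF μ (v + w) x ∂volume := by
            refine setLIntegral_congr_fun measurableSet_Iic (fun x _ => ?_)
            simp_rw [hpt x]
            rw [lintegral_const_mul _ (measurable_gaussianPDF _ _),
              lintegral_gaussianPDF_eq_one _ hswne, mul_one]
        _ = gaussianReal μ (v + w) (Set.Iic c) := (gaussianReal_apply μ hvw _).symm
    rw [key, gaussianReal_Iic_toReal μ (v + w) hvw c]
    congr 2
end
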